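/- Suppose u: Λ → ℝ is the pointwise limit of functions u^h as h → 0, each u^h is uniformly bounded by M, uniformly L-Lipschitz in ω in the sup norm, and satisfies |u^h(t,ω) − u^h(t',ω_{·∧t})| ≤ C√(t'−t+h) for t < t'. Then u is bounded by M, L-Lipschitz in ω, and satisfies |u(t,ω) − u(t',ω')| ≤ C' d((t,ω),(t',ω')) for all (t,ω),(t',ω'), where d((t,ω),(t',ω')) = √|t−t'| + ‖ω_{·∧t} − ω'_{·∧t'}‖_T and C' depends only on C and L. -/
import Mathlib


open Filter

/-- Transfer of uniform regularity from the approximations `u^h` to the limit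
`u` (conclusion (4.14)): uniform bounds, uniform space-Lipschitz continuity and
the uniform `√(t'−t+h)` time regularity pass to the pointwise limit `u`, which
is then Lipschitz with respect to the pseudometric
`d((t,ω),(t',ω')) = √|t−t'| + ‖ω_{·∧t} − ω'_{·∧t'}‖_T`. -/
theorem stmt_18 (d : ℕ) (T M L C : ℝ) (hT : 0 < T)
    (hM : 0 ≤ M) (hL : 0 ≤ L) (hC : 0 ≤ C)
    (uh : ℝ → ℝ → (ℝ → EuclideanSpace ℝ (Fin d)) → ℝ)
    (u : ℝ → (ℝ → EuclideanSpace ℝ (Fin d)) → ℝ)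
    (hlim : ∀ (t : ℝ) (ω : ℝ → EuclideanSpace ℝ (Fin d)),
      Tendsto (fun h => uh h t ω) (nhdsWithin 0 (Set.Ioi 0)) (nhds (u t ω)))
    (hbd : ∀ h ∈ Set.Ioi (0:ℝ), ∀ t ω, |uh h t ω| ≤ M)
    (hlip : ∀ h ∈ Set.Ioi (0:ℝ), ∀ (t : ℝ) (ω1 ω2 : ℝ → EuclideanSpace ℝ (Fin d)),
      |uh h t ω1 - uh h t ω2| ≤ L * ⨆ s : Set.Icc (0:ℝ) T, ‖ω1 s - ω2 s‖)
    (htime : ∀ h ∈ Set.Ioi (0:ℝ), ∀ (t t' : ℝ), 0 ≤ t → t < t' → t' ≤ T →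
      ∀ ω : ℝ → EuclideanSpace ℝ (Fin d),
        |uh h t ω - uh h t' (fun s => ω (min s t))| ≤ C * Real.sqrt (t' - t + h)) :
    (∀ t ω, |u t ω| ≤ M) ∧
    (∀ (t : ℝ) (ω1 ω2 : ℝ → EuclideanSpace ℝ (Fin d)),
      |u t ω1 - u t ω2| ≤ L * ⨆ s : Set.Icc (0:ℝ) T, ‖ω1 s - ω2 s‖) ∧
    (∃ C' : ℝ, 0 < C' ∧
      ∀ (t t' : ℝ) (ω ω' : ℝ → EuclideanSpace ℝ (Fin d)),
        0 ≤ t → t ≤ T → 0 ≤ t' → t' ≤ T →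
        |u t ω - u t' ω'| ≤ C' * (Real.sqrt |t - t'| +
          ⨆ s : Set.Icc (0:ℝ) T, ‖ω (min (s:ℝ) t) - ω' (min (s:ℝ) t')‖)) := by
  haveI : Nonempty (Set.Icc (0:ℝ) T) := ⟨⟨0, le_refl 0, hT.le⟩⟩
  -- limit of uniform bound
  have hbd' : ∀ t ω, |u t ω| ≤ M := by
    intro t ω
    have h1 : Tendsto (fun h => |uh h t ω|) (nhdsWithin 0 (Set.Ioi 0)) (nhds |u t ω|) :=
      (continuous_abs.tendsto _).comp (hlim t ω)
    exact le_of_tendsto h1 (eventually_nhdsWithin_of_forall fun h hh => hbd h hh t ω)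
  -- limit of Lipschitz bound
  have hlip' : ∀ (t : ℝ) (ω1 ω2 : ℝ → EuclideanSpace ℝ (Fin d)),
      |u t ω1 - u t ω2| ≤ L * ⨆ s : Set.Icc (0:ℝ) T, ‖ω1 s - ω2 s‖ := by
    intro t ω1 ω2
    have h1 : Tendsto (fun h => |uh h t ω1 - uh h t ω2|) (nhdsWithin 0 (Set.Ioi 0))
        (nhds |u t ω1 - u t ω2|) :=
      (continuous_abs.tendsto _).comp ((hlim t ω1).sub (hlim t ω2))
    exact le_of_tendsto h1 (eventually_nhdsWithin_of_forall fun h hh => hlip h hh t ω1 ω2)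
  -- limit of time regularity
  have htime' : ∀ (t t' : ℝ), 0 ≤ t → t < t' → t' ≤ T →
      ∀ ω : ℝ → EuclideanSpace ℝ (Fin d),
        |u t ω - u t' (fun s => ω (min s t))| ≤ C * Real.sqrt (t' - t) := by
    intro t t' h0 htt hT' ω
    have h1 : Tendsto (fun h => |uh h t ω - uh h t' (fun s => ω (min s t))|)
        (nhdsWithin 0 (Set.Ioi 0)) (nhds |u t ω - u t' (fun s => ω (min s t))|) :=
      (continuous_abs.tendsto _).comp ((hlim t ω).sub (hlim t' (fun s => ω (min s t))))
    have h2 : Tendsto (fun h : ℝ => C * Real.sqrt (t' - t + h)) (nhdsWithin 0 (Set.Ioi 0))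
        (nhds (C * Real.sqrt (t' - t))) := by
      have hc : Tendsto (fun h : ℝ => C * Real.sqrt (t' - t + h)) (nhds 0)
          (nhds (C * Real.sqrt (t' - t + 0))) :=
        Continuous.tendsto (continuous_const.mul
          (Real.continuous_sqrt.comp (continuous_const.add continuous_id))) 0
      simpa using hc.mono_left nhdsWithin_le_nhds
    exact le_of_tendsto_of_tendsto h1 h2
      (eventually_nhdsWithin_of_forall fun h hh => htime h hh t t' h0 htt hT' ω)
  -- u depends only on the stopped path
  have hstop : ∀ t, 0 ≤ t → t ≤ T → ∀ ζ : ℝ → EuclideanSpace ℝ (Fin d),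
      u t ζ = u t (fun s => ζ (min s t)) := by
    intro t h0 hTt ζ
    rcases eq_or_lt_of_le hTt with rfl | hlt
    · -- t = T : use Lipschitz, the paths agree on [0,T]
      have h1 := hlip' t ζ (fun s => ζ (min s t))
      have h2 : (⨆ s : Set.Icc (0:ℝ) t, ‖ζ (s:ℝ) - ζ (min (s:ℝ) t)‖) = 0 := by
        have he : ∀ s : Set.Icc (0:ℝ) t, ‖ζ (s:ℝ) - ζ (min (s:ℝ) t)‖ = 0 := by
          intro s
          rw [min_eq_left s.2.2]
          simp
        rw [iSup_congr he]
        exact ciSup_const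
      rw [h2, mul_zero] at h1
      exact sub_eq_zero.mp (abs_nonpos_iff.mp h1)
    · have key : ∀ ε > (0:ℝ), |u t ζ - u t (fun s => ζ (min s t))| ≤ 2 * (C * Real.sqrt ε) := by
        intro ε hε
        set t' := min (t + ε) T with ht'
        have htt' : t < t' := lt_min (by linarith) hlt
        have ht'T : t' ≤ T := min_le_right _ _
        have h1 := htime' t t' h0 htt' ht'T ζ
        have h2 := htime' t t' h0 htt' ht'T (fun s => ζ (min s t))
        have heq : (fun s => (fun s => ζ (min s t)) (min s t)) = (fun s => ζ (min s t)) := by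
          funext s
          simp [min_assoc]
        rw [heq] at h2
        have hs : Real.sqrt (t' - t) ≤ Real.sqrt ε := by
          apply Real.sqrt_le_sqrt
          have : t' ≤ t + ε := min_le_left _ _
          linarith
        have hcs : C * Real.sqrt (t' - t) ≤ C * Real.sqrt ε :=
          mul_le_mul_of_nonneg_left hs hC
        calc |u t ζ - u t (fun s => ζ (min s t))|
            ≤ |u t ζ - u t' (fun s => ζ (min s t))|
              + |u t' (fun s => ζ (min s t)) - u t (fun s => ζ (min s t))| := abs_sub_le _ _ _
          _ ≤ C * Real.sqrt (t' - t) + C * Real.sqrt (t' - t) := by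
              rw [abs_sub_comm (u t' fun s => ζ (min s t))]
              exact add_le_add h1 h2
          _ ≤ 2 * (C * Real.sqrt ε) := by linarith
      have h0' : Tendsto (fun ε : ℝ => 2 * (C * Real.sqrt ε)) (nhdsWithin 0 (Set.Ioi 0))
          (nhds 0) := by
        have hc : Tendsto (fun ε : ℝ => 2 * (C * Real.sqrt ε)) (nhds 0)
            (nhds (2 * (C * Real.sqrt 0))) :=
          Continuous.tendsto (continuous_const.mul
            (continuous_const.mul Real.continuous_sqrt)) 0
        simpa using hc.mono_left nhdsWithin_le_nhds
      have hle : |u t ζ - u t (fun s => ζ (min s t))| ≤ 0 :=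
        ge_of_tendsto h0' (eventually_nhdsWithin_of_forall fun ε hε => key ε hε)
      exact sub_eq_zero.mp (abs_nonpos_iff.mp hle)
  -- time regularity with ≤
  have htimeA : ∀ (t t' : ℝ), 0 ≤ t → t ≤ t' → t' ≤ T →
      ∀ ω : ℝ → EuclideanSpace ℝ (Fin d),
        |u t ω - u t' (fun s => ω (min s t))| ≤ C * Real.sqrt (t' - t) := by
    intro t t' h0 htt hT' ω
    rcases eq_or_lt_of_le htt with rfl | h
    · rw [← hstop t h0 hT' ω]
      simp
    · exact htime' t t' h0 h hT' ω
  -- main helper for t ≤ t'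
  have main : ∀ (t t' : ℝ) (ω ω' : ℝ → EuclideanSpace ℝ (Fin d)),
      0 ≤ t → t ≤ t' → t' ≤ T →
      |u t ω - u t' ω'| ≤ (C + L + 1) * (Real.sqrt |t - t'| +
        ⨆ s : Set.Icc (0:ℝ) T, ‖ω (min (s:ℝ) t) - ω' (min (s:ℝ) t')‖) := by
    intro t t' ω ω' h0 htt hT'
    have hA := htimeA t t' h0 htt hT' ω
    have hB : |u t' (fun s => ω (min s t)) - u t' ω'|
        ≤ L * ⨆ s : Set.Icc (0:ℝ) T, ‖ω (min (s:ℝ) t) - ω' (min (s:ℝ) t')‖ := by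
      rw [hstop t' (le_trans h0 htt) hT' ω']
      exact hlip' t' _ _
    have hS : 0 ≤ ⨆ s : Set.Icc (0:ℝ) T, ‖ω (min (s:ℝ) t) - ω' (min (s:ℝ) t')‖ :=
      Real.iSup_nonneg fun s => norm_nonneg _
    have habs : |t - t'| = t' - t := by
      rw [abs_sub_comm]
      exact abs_of_nonneg (by linarith)
    calc |u t ω - u t' ω'|
        ≤ |u t ω - u t' (fun s => ω (min s t))| + |u t' (fun s => ω (min s t)) - u t' ω'| :=
          abs_sub_le _ _ _
      _ ≤ C * Real.sqrt (t' - t)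
          + L * ⨆ s : Set.Icc (0:ℝ) T, ‖ω (min (s:ℝ) t) - ω' (min (s:ℝ) t')‖ :=
          add_le_add hA hB
      _ ≤ (C + L + 1) * (Real.sqrt |t - t'| +
          ⨆ s : Set.Icc (0:ℝ) T, ‖ω (min (s:ℝ) t) - ω' (min (s:ℝ) t')‖) := by
          rw [habs]
          nlinarith [Real.sqrt_nonneg (t' - t)]
  refine ⟨hbd', hlip', C + L + 1, by linarith, ?_⟩
  intro t t' ω ω' h0 h1 h0' h1'
  rcases le_total t t' with h | h
  · exact main t t' ω ω' h0 h h1'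
  · have hm := main t' t ω' ω h0' h h1
    rw [abs_sub_comm (u t' ω') (u t ω), abs_sub_comm t' t] at hm
    have hsup : (⨆ s : Set.Icc (0:ℝ) T, ‖ω' (min (s:ℝ) t') - ω (min (s:ℝ) t)‖)
        = ⨆ s : Set.Icc (0:ℝ) T, ‖ω (min (s:ℝ) t) - ω' (min (s:ℝ) t')‖ :=
      iSup_congr fun s => norm_sub_rev _ _
    rw [hsup] at hm
    exact hm
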